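/- The set E = {(λ, 2λ) : λ ∈ ℤ≥0} ∪ {(2λ, λ) : λ ∈ ℤ≥0} ⊆ ℝ² cannot be written in the form ⋃_{i=1}^k P_i + intcone{r¹,…,rᵗ}, where each P_i is a polytope in ℝ² and intcone{r¹,…,rᵗ} denotes the set of nonnegative integer combinations of finitely many integer vectors r¹,…,rᵗ ∈ ℤ². In particular (by the Jeroslow–Lowe theorem), E is not MILP-representable. -/

import Mathlib

open Pointwise

/-- A set S ⊆ ℝⁿ is MILP-representable if it is the projection onto the x-variables
of a mixed-integer linear set {(x,y,z) ∈ ℝⁿ × ℝᵖ × ℤ^q : Bx + Cy + Dz ≥ b}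
with rational matrices B, C, D. -/
def MILPRep (n : ℕ) (S : Set (Fin n → ℝ)) : Prop :=
  ∃ (p q m : ℕ) (B : Matrix (Fin m) (Fin n) ℚ) (C : Matrix (Fin m) (Fin p) ℚ)
    (D : Matrix (Fin m) (Fin q) ℚ) (b : Fin m → ℝ),
    S = {x | ∃ (y : Fin p → ℝ) (z : Fin q → ℤ), ∀ i,
      b i ≤ (∑ j, (B i j : ℝ) * x j) + (∑ j, (C i j : ℝ) * y j)
          + (∑ j, (D i j : ℝ) * (z j : ℝ))}

/-- The set E = {(λ,2λ) : λ ∈ ℤ≥0} ∪ {(2λ,λ) : λ ∈ ℤ≥0} ⊆ ℝ². -/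
def Eset : Set (Fin 2 → ℝ) :=
  {x | ∃ l : ℕ, (x 0 = (l : ℝ) ∧ x 1 = 2 * (l : ℝ)) ∨ (x 0 = 2 * (l : ℝ) ∧ x 1 = (l : ℝ))}

/-- A polytope: a bounded set of the form {x : Ax ≥ b}. -/
def IsPolytope (S : Set (Fin 2 → ℝ)) : Prop :=
  ∃ (m : ℕ) (A : Matrix (Fin m) (Fin 2) ℝ) (b : Fin m → ℝ),
    S = {x | ∀ i, b i ≤ ∑ j, A i j * x j} ∧ Bornology.IsBounded S

/-- intcone{r¹,…,rᵗ}: the set of nonnegative integer combinations of r¹,…,rᵗ ∈ ℤ². -/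
def intcone {t : ℕ} (r : Fin t → Fin 2 → ℤ) : Set (Fin 2 → ℝ) :=
  {x | ∃ lam : Fin t → ℕ, ∀ j, x j = ∑ i, (lam i : ℝ) * (r i j : ℝ)}

noncomputable section FM

abbrev Row (d : ℕ) := (Fin d → ℝ) × ℝ

def SatL {d : ℕ} (L : List (Row d)) (u : Fin d → ℝ) : Prop :=
  ∀ c ∈ L, c.2 ≤ ∑ i, c.1 i * u i

def IsRat (x : ℝ) : Prop := ∃ a : ℚ, x = (a : ℝ)

lemma IsRat.add {x y : ℝ} (hx : IsRat x) (hy : IsRat y) : IsRat (x + y) := by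
  obtain ⟨a, rfl⟩ := hx; obtain ⟨b, rfl⟩ := hy; exact ⟨a + b, by push_cast; ring⟩

lemma IsRat.mul {x y : ℝ} (hx : IsRat x) (hy : IsRat y) : IsRat (x * y) := by
  obtain ⟨a, rfl⟩ := hx; obtain ⟨b, rfl⟩ := hy; exact ⟨a * b, by push_cast; ring⟩

lemma IsRat.sub {x y : ℝ} (hx : IsRat x) (hy : IsRat y) : IsRat (x - y) := by
  obtain ⟨a, rfl⟩ := hx; obtain ⟨b, rfl⟩ := hy; exact ⟨a - b, by push_cast; ring⟩

lemma IsRat.div {x y : ℝ} (hx : IsRat x) (hy : IsRat y) : IsRat (x / y) := by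
  obtain ⟨a, rfl⟩ := hx; obtain ⟨b, rfl⟩ := hy
  exact ⟨a / b, by rw [Rat.cast_div]⟩

lemma IsRat.zero : IsRat 0 := ⟨0, by simp⟩
lemma IsRat.one : IsRat 1 := ⟨1, by simp⟩
lemma IsRat.neg {x : ℝ} (hx : IsRat x) : IsRat (-x) := by
  obtain ⟨a, rfl⟩ := hx; exact ⟨-a, by push_cast; ring⟩

lemma IsRat.sum {ι : Type*} (s : Finset ι) (f : ι → ℝ) (h : ∀ i ∈ s, IsRat (f i)) :
    IsRat (∑ i ∈ s, f i) :=
  Finset.sum_induction f IsRat (fun _ _ => IsRat.add) IsRat.zero h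

def QV {d : ℕ} (u : Fin d → ℝ) : Prop := ∀ i, IsRat (u i)

def comb {d : ℕ} (c c' : Row (d + 1)) : Row d :=
  (fun i => (-(c'.1 (Fin.last d))) * c.1 i.castSucc + (c.1 (Fin.last d)) * c'.1 i.castSucc,
   (-(c'.1 (Fin.last d))) * c.2 + (c.1 (Fin.last d)) * c'.2)

def elimv {d : ℕ} (L : List (Row (d + 1))) : List (Row d) :=
  (L.filterMap fun c => if c.1 (Fin.last d) = 0 then some (Fin.init c.1, c.2) else none) ++
  ((L ×ˢ L).filterMap fun cc =>
     if 0 < cc.1.1 (Fin.last d) ∧ cc.2.1 (Fin.last d) < 0 then some (comb cc.1 cc.2) else none)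

lemma comb_eval {d : ℕ} (c c' : Row (d + 1)) (v : Fin d → ℝ) :
    ∑ i, (comb c c').1 i * v i =
      (-(c'.1 (Fin.last d))) * (∑ i : Fin d, c.1 i.castSucc * v i)
        + (c.1 (Fin.last d)) * (∑ i : Fin d, c'.1 i.castSucc * v i) := by
  simp only [comb, Finset.mul_sum, ← Finset.sum_add_distrib]
  apply Finset.sum_congr rfl
  intro i _
  ring

lemma sum_split {d : ℕ} (c : Fin (d + 1) → ℝ) (u : Fin (d + 1) → ℝ) :
    ∑ i, c i * u i =
      (∑ i : Fin d, c i.castSucc * u i.castSucc) + c (Fin.last d) * u (Fin.last d) :=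
  Fin.sum_univ_castSucc _

lemma elimv_sound {d : ℕ} {L : List (Row (d + 1))} {u : Fin (d + 1) → ℝ}
    (h : SatL L u) : SatL (elimv L) (Fin.init u) := by
  intro c hc
  rcases List.mem_append.mp hc with h1 | h2
  · obtain ⟨c0, hc0, heq⟩ := List.mem_filterMap.mp h1
    by_cases hz : c0.1 (Fin.last d) = 0
    · rw [if_pos hz] at heq
      obtain rfl := Option.some.inj heq
      have := h c0 hc0
      rw [sum_split] at this
      rw [hz, zero_mul, add_zero] at this
      simpa [Fin.init] using this
    · rw [if_neg hz] at heq; exact absurd heq (by simp)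
  · obtain ⟨⟨c1, c2⟩, hcc, heq⟩ := List.mem_filterMap.mp h2
    obtain ⟨hc1, hc2⟩ := List.pair_mem_product.mp hcc
    by_cases hcond : 0 < c1.1 (Fin.last d) ∧ c2.1 (Fin.last d) < 0
    · rw [if_pos hcond] at heq
      obtain rfl := Option.some.inj heq
      obtain ⟨he, hf⟩ := hcond
      have h1 := h c1 hc1
      have h2' := h c2 hc2
      rw [sum_split] at h1 h2'
      have key : ∑ i, (comb c1 c2).1 i * Fin.init u i =
          (-(c2.1 (Fin.last d))) * (∑ i : Fin d, c1.1 i.castSucc * u i.castSucc)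
            + (c1.1 (Fin.last d)) * (∑ i : Fin d, c2.1 i.castSucc * u i.castSucc) := by
        have := comb_eval c1 c2 (Fin.init u)
        simpa [Fin.init] using this
      rw [key]
      show (comb c1 c2).2 ≤ _
      simp only [comb]
      nlinarith [mul_le_mul_of_nonneg_left h1 (le_of_lt (neg_pos.mpr hf)),
        mul_le_mul_of_nonneg_left h2' (le_of_lt he)]
    · rw [if_neg hcond] at heq; exact absurd heq (by simp)

lemma exists_max_of_ne_nil {α : Type*} [LinearOrder α] (l : List α) (h : l ≠ []) :
    ∃ m ∈ l, ∀ x ∈ l, x ≤ m := by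
  induction l with
  | nil => exact absurd rfl h
  | cons a tl ih =>
    rcases eq_or_ne tl [] with rfl | h'
    · exact ⟨a, by simp, by simp⟩
    · obtain ⟨m, hm, hall⟩ := ih h'
      rcases le_total a m with hh | hh
      · refine ⟨m, by simp [hm], ?_⟩
        intro x hx
        rcases List.mem_cons.mp hx with rfl | hx
        · exact hh
        · exact hall x hx
      · refine ⟨a, by simp, ?_⟩
        intro x hx
        rcases List.mem_cons.mp hx with rfl | hx
        · exact le_refl x
        · exact le_trans (hall x hx) hh

lemma exists_min_of_ne_nil {α : Type*} [LinearOrder α] (l : List α) (h : l ≠ []) :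
    ∃ m ∈ l, ∀ x ∈ l, m ≤ x :=
  exists_max_of_ne_nil (α := αᵒᵈ) l h

lemma elimv_complete {d : ℕ} {L : List (Row (d + 1))} {v : Fin d → ℝ}
    (h : SatL (elimv L) v) :
    ∃ t : ℝ, SatL L (Fin.snoc v t) ∧
      ((∀ c ∈ L, QV c.1 ∧ IsRat c.2) → QV v → IsRat t) := by
  classical
  set S : Row (d + 1) → ℝ := fun c => ∑ i : Fin d, c.1 i.castSucc * v i with hS
  set lows : List ℝ := L.filterMap fun c =>
    if 0 < c.1 (Fin.last d) then some ((c.2 - S c) / (c.1 (Fin.last d))) else none with hlows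
  set ups : List ℝ := L.filterMap fun c =>
    if c.1 (Fin.last d) < 0 then some ((c.2 - S c) / (c.1 (Fin.last d))) else none with hups
  -- each element of lows is ≤ each element of ups
  have hLU : ∀ lb ∈ lows, ∀ ub ∈ ups, lb ≤ ub := by
    intro lb hlb ub hub
    obtain ⟨c1, hc1, h1⟩ := List.mem_filterMap.mp hlb
    obtain ⟨c2, hc2, h2⟩ := List.mem_filterMap.mp hub
    by_cases he : 0 < c1.1 (Fin.last d)
    swap; · rw [if_neg he] at h1; exact absurd h1 (by simp)
    by_cases hf : c2.1 (Fin.last d) < 0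
    swap; · rw [if_neg hf] at h2; exact absurd h2 (by simp)
    rw [if_pos he] at h1; rw [if_pos hf] at h2
    obtain rfl := Option.some.inj h1
    obtain rfl := Option.some.inj h2
    have hcomb : comb c1 c2 ∈ elimv L := by
      apply List.mem_append.mpr
      right
      apply List.mem_filterMap.mpr
      exact ⟨(c1, c2), List.pair_mem_product.mpr ⟨hc1, hc2⟩, by rw [if_pos ⟨he, hf⟩]⟩
    have H := h _ hcomb
    rw [comb_eval] at H
    have H' : (-(c2.1 (Fin.last d))) * c1.2 + (c1.1 (Fin.last d)) * c2.2 ≤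
        (-(c2.1 (Fin.last d))) * S c1 + (c1.1 (Fin.last d)) * S c2 := H
    have hA : (c1.2 - S c1) / (c1.1 (Fin.last d)) * (c1.1 (Fin.last d)) = c1.2 - S c1 :=
      div_mul_cancel₀ _ (ne_of_gt he)
    have hB : (c2.2 - S c2) / (c2.1 (Fin.last d)) * (c2.1 (Fin.last d)) = c2.2 - S c2 :=
      div_mul_cancel₀ _ (ne_of_lt hf)
    nlinarith [mul_pos he (neg_pos.mpr hf)]
  -- rationality of members
  have hratmem : (∀ c ∈ L, QV c.1 ∧ IsRat c.2) → QV v →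
      ∀ x, (x ∈ lows ∨ x ∈ ups) → IsRat x := by
    intro hQL hQv x hx
    have : ∃ c ∈ L, x = (c.2 - S c) / (c.1 (Fin.last d)) := by
      rcases hx with hx | hx
      · obtain ⟨c, hc, hh⟩ := List.mem_filterMap.mp hx
        by_cases hcnd : 0 < c.1 (Fin.last d)
        · rw [if_pos hcnd] at hh; exact ⟨c, hc, (Option.some.inj hh).symm⟩
        · rw [if_neg hcnd] at hh; exact absurd hh (by simp)
      · obtain ⟨c, hc, hh⟩ := List.mem_filterMap.mp hx
        by_cases hcnd : c.1 (Fin.last d) < 0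
        · rw [if_pos hcnd] at hh; exact ⟨c, hc, (Option.some.inj hh).symm⟩
        · rw [if_neg hcnd] at hh; exact absurd hh (by simp)
    obtain ⟨c, hc, rfl⟩ := this
    obtain ⟨hq1, hq2⟩ := hQL c hc
    exact IsRat.div (IsRat.sub hq2 (IsRat.sum _ _ fun i _ => (hq1 _).mul (hQv i)))
      (hq1 _)
  -- the three satisfaction cases
  have hsat_of : ∀ t : ℝ, (∀ lb ∈ lows, lb ≤ t) → (∀ ub ∈ ups, t ≤ ub) →
      SatL L (Fin.snoc v t) := by
    intro t hlo hup c hc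
    have hsum : ∑ i, c.1 i * (Fin.snoc v t : Fin (d+1) → ℝ) i = S c + c.1 (Fin.last d) * t := by
      rw [sum_split]
      have e1 : (∑ i : Fin d, c.1 i.castSucc * (Fin.snoc v t : Fin (d+1) → ℝ) i.castSucc) = S c := by
        apply Finset.sum_congr rfl
        intro i _
        rw [Fin.snoc_castSucc]
      rw [e1, Fin.snoc_last]
    rw [hsum]
    rcases lt_trichotomy (c.1 (Fin.last d)) 0 with hneg | hzero | hpos
    · have hmem : (c.2 - S c) / (c.1 (Fin.last d)) ∈ ups := by
        apply List.mem_filterMap.mpr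
        exact ⟨c, hc, by rw [if_pos hneg]⟩
      have := hup _ hmem
      have hB : (c.2 - S c) / (c.1 (Fin.last d)) * (c.1 (Fin.last d)) = c.2 - S c :=
        div_mul_cancel₀ _ (ne_of_lt hneg)
      nlinarith
    · -- zero coefficient: the init row is in elimv L
      have hmem : (Fin.init c.1, c.2) ∈ elimv L := by
        apply List.mem_append.mpr
        left
        exact List.mem_filterMap.mpr ⟨c, hc, by rw [if_pos hzero]⟩
      have := h _ hmem
      have : c.2 ≤ S c := by
        simpa [Fin.init, hS] using this
      rw [hzero]
      linarith
    · have hmem : (c.2 - S c) / (c.1 (Fin.last d)) ∈ lows := by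
        apply List.mem_filterMap.mpr
        exact ⟨c, hc, by rw [if_pos hpos]⟩
      have := hlo _ hmem
      have hB : (c.2 - S c) / (c.1 (Fin.last d)) * (c.1 (Fin.last d)) = c.2 - S c :=
        div_mul_cancel₀ _ (ne_of_gt hpos)
      nlinarith
  by_cases hl : lows = []
  · by_cases hu : ups = []
    · refine ⟨0, hsat_of 0 (by rw [hl]; simp) (by rw [hu]; simp), fun _ _ => IsRat.zero⟩
    · obtain ⟨m, hm, hmin⟩ := exists_min_of_ne_nil ups hu
      refine ⟨m, hsat_of m (by rw [hl]; simp) hmin, fun hQL hQv => hratmem hQL hQv m (Or.inr hm)⟩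
  · obtain ⟨m, hm, hmax⟩ := exists_max_of_ne_nil lows hl
    refine ⟨m, hsat_of m hmax (fun ub hub => hLU m hm ub hub),
      fun hQL hQv => hratmem hQL hQv m (Or.inl hm)⟩


def homog {d : ℕ} (c : Row d) : Row d := (c.1, 0)

lemma elimv_homog {d : ℕ} (L : List (Row (d + 1))) :
    elimv (L.map homog) = (elimv L).map homog := by
  unfold elimv
  rw [List.map_append, List.filterMap_map, List.map_filterMap, List.map_filterMap]
  congr 1
  · apply List.filterMap_congr
    intro c _
    simp only [Function.comp, homog]
    split_ifs <;> simp_all [homog]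
  · have hprod : (L.map homog ×ˢ L.map homog) = (L ×ˢ L).map (Prod.map homog homog) := by
      simp only [SProd.sprod, List.product, List.map_flatMap, List.flatMap_map, List.map_map]
      refine congrArg (fun g => List.flatMap g L) (funext fun a => ?_)
      refine congrArg (fun f => List.map f L) (funext fun b => ?_)
      simp [Prod.map, homog]
    rw [hprod, List.filterMap_map]
    apply List.filterMap_congr
    intro cc _
    simp only [Function.comp, Prod.map, homog, comb]
    split_ifs <;> simp_all [comb, homog]

lemma QL_homog {d : ℕ} {L : List (Row d)} (h : ∀ c ∈ L, QV c.1) :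
    ∀ c ∈ L.map homog, QV c.1 ∧ IsRat c.2 := by
  intro c hc
  obtain ⟨c0, hc0, rfl⟩ := List.mem_map.mp hc
  exact ⟨h c0 hc0, IsRat.zero⟩

lemma elimv_qcoeff {d : ℕ} {L : List (Row (d + 1))} (h : ∀ c ∈ L, QV c.1) :
    ∀ c ∈ elimv L, QV c.1 := by
  intro c hc
  rcases List.mem_append.mp hc with h1 | h2
  · obtain ⟨c0, hc0, heq⟩ := List.mem_filterMap.mp h1
    by_cases hz : c0.1 (Fin.last d) = 0
    · rw [if_pos hz] at heq
      obtain rfl := Option.some.inj heq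
      intro i
      exact h c0 hc0 _
    · rw [if_neg hz] at heq; exact absurd heq (by simp)
  · obtain ⟨⟨c1, c2⟩, hcc, heq⟩ := List.mem_filterMap.mp h2
    obtain ⟨hc1, hc2⟩ := List.pair_mem_product.mp hcc
    by_cases hcond : 0 < c1.1 (Fin.last d) ∧ c2.1 (Fin.last d) < 0
    · rw [if_pos hcond] at heq
      obtain rfl := Option.some.inj heq
      intro i
      exact ((h c2 hc2 _).neg.mul (h c1 hc1 _)).add ((h c1 hc1 _).mul (h c2 hc2 _))
    · rw [if_neg hcond] at heq; exact absurd heq (by simp)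

lemma fm_main : ∀ (M : ℕ) (L : List (Row (M + 1))),
    (∀ c ∈ L, QV c.1) →
    (∀ n : ℕ, ∃ u : Fin (M + 1) → ℝ, u 0 = (n : ℝ) ∧ SatL L u) →
    ∃ u : Fin (M + 1) → ℝ, QV u ∧ u 0 = 1 ∧ SatL (L.map homog) u := by
  intro M
  induction M with
  | zero =>
    intro L hQ hfeas
    have hpos : ∀ c ∈ L, 0 ≤ c.1 0 := by
      intro c hc
      by_contra hneg
      push_neg at hneg
      obtain ⟨n, hn⟩ := exists_nat_gt (c.2 / c.1 0)
      obtain ⟨u, hu0, hu⟩ := hfeas n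
      have hsat := hu c hc
      have hsum : ∑ i, c.1 i * u i = c.1 0 * (n : ℝ) := by
        rw [Fin.sum_univ_one, hu0]
      rw [hsum] at hsat
      have hcc : c.1 0 * (c.2 / c.1 0) = c.2 := mul_div_cancel₀ _ (ne_of_lt hneg)
      nlinarith
    refine ⟨fun _ => 1, fun _ => IsRat.one, rfl, ?_⟩
    intro c hc
    obtain ⟨c0, hc0, rfl⟩ := List.mem_map.mp hc
    have : ∑ i, (homog c0).1 i * (1 : ℝ) = c0.1 0 := by
      simp [homog, Fin.sum_univ_one]
    rw [this]
    exact hpos c0 hc0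
  | succ M ih =>
    intro L hQ hfeas
    have hfeas' : ∀ n : ℕ, ∃ u : Fin (M + 1) → ℝ, u 0 = (n : ℝ) ∧ SatL (elimv L) u := by
      intro n
      obtain ⟨u, hu0, hu⟩ := hfeas n
      refine ⟨Fin.init u, ?_, elimv_sound hu⟩
      rw [show (Fin.init u) 0 = u (Fin.castSucc 0) from rfl, Fin.castSucc_zero, hu0]
    obtain ⟨u', hQu', hu'0, hsat'⟩ := ih (elimv L) (elimv_qcoeff hQ) hfeas'
    rw [← elimv_homog] at hsat'
    obtain ⟨t, hsat, hrat⟩ := elimv_complete hsat'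
    refine ⟨Fin.snoc u' t, ?_, ?_, hsat⟩
    · intro i
      induction i using Fin.lastCases with
      | last =>
        rw [Fin.snoc_last]
        exact hrat (QL_homog hQ) hQu'
      | cast j =>
        rw [Fin.snoc_castSucc]
        exact hQu' j
    · rw [show (0 : Fin (M + 1 + 1)) = Fin.castSucc 0 from (Fin.castSucc_zero).symm,
        Fin.snoc_castSucc, hu'0]

theorem part2aux : ¬ MILPRep 2 Eset := by
  rintro ⟨p, q, m, B, C, D, b, hE⟩
  -- the constraint rows in variables (s, y, z)
  set row : Fin m → Row (p + q + 1) := fun i =>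
    (Fin.cons ((B i 0 : ℝ) + 2 * (B i 1 : ℝ))
      (Fin.append (fun j => (C i j : ℝ)) (fun j => (D i j : ℝ))), b i) with hrow
  set L : List (Row (p + q + 1)) := (List.finRange m).map row with hL
  have hsum : ∀ (i : Fin m) (u : Fin (p + q + 1) → ℝ),
      ∑ k, (row i).1 k * u k =
        ((B i 0 : ℝ) + 2 * (B i 1 : ℝ)) * u 0
          + ((∑ j, (C i j : ℝ) * u (Fin.succ (Fin.castAdd q j)))
          + (∑ j, (D i j : ℝ) * u (Fin.succ (Fin.natAdd p j)))) := by
    intro i u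
    rw [Fin.sum_univ_succ]
    simp only [hrow, Fin.cons_zero, Fin.cons_succ]
    congr 1
    rw [Fin.sum_univ_add]
    congr 1
    · apply Finset.sum_congr rfl; intro j _; rw [Fin.append_left]
    · apply Finset.sum_congr rfl; intro j _; rw [Fin.append_right]
  have hQ : ∀ c ∈ L, QV c.1 := by
    intro c hc
    obtain ⟨i, _, rfl⟩ := List.mem_map.mp hc
    intro k
    simp only [hrow]
    induction k using Fin.cases with
    | zero =>
      rw [Fin.cons_zero]
      exact ⟨B i 0 + 2 * B i 1, by push_cast; ring⟩
    | succ j =>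
      rw [Fin.cons_succ]
      induction j using Fin.addCases with
      | left j => rw [Fin.append_left]; exact ⟨C i j, rfl⟩
      | right j => rw [Fin.append_right]; exact ⟨D i j, rfl⟩
  have hfeas : ∀ n : ℕ, ∃ u : Fin (p + q + 1) → ℝ, u 0 = (n : ℝ) ∧ SatL L u := by
    intro n
    have hx : (![(n : ℝ), 2 * (n : ℝ)] : Fin 2 → ℝ) ∈ Eset := ⟨n, Or.inl ⟨by simp, by simp⟩⟩
    rw [hE] at hx
    obtain ⟨y, z, hyz⟩ := hx
    refine ⟨Fin.cons (n : ℝ) (Fin.append y (fun j => (z j : ℝ))), Fin.cons_zero _ _, ?_⟩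
    intro c hc
    obtain ⟨i, _, rfl⟩ := List.mem_map.mp hc
    rw [hsum]
    have e1 : ∀ j : Fin p,
        (Fin.cons (n : ℝ) (Fin.append y (fun j => (z j : ℝ))) : Fin (p+q+1) → ℝ)
          (Fin.succ (Fin.castAdd q j)) = y j := by
      intro j; rw [Fin.cons_succ, Fin.append_left]
    have e2 : ∀ j : Fin q,
        (Fin.cons (n : ℝ) (Fin.append y (fun j => (z j : ℝ))) : Fin (p+q+1) → ℝ)
          (Fin.succ (Fin.natAdd p j)) = (z j : ℝ) := by
      intro j; rw [Fin.cons_succ, Fin.append_right]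
    have h0 := hyz i
    rw [Fin.sum_univ_two] at h0
    simp only [Matrix.cons_val_zero, Matrix.cons_val_one, Matrix.head_cons] at h0
    calc (row i).2 = b i := rfl
      _ ≤ (B i 0 : ℝ) * (n : ℝ) + (B i 1 : ℝ) * (2 * (n : ℝ))
            + ((∑ j, (C i j : ℝ) * y j) + (∑ j, (D i j : ℝ) * (z j : ℝ))) := by
          rw [← add_assoc]; exact h0
      _ = ((B i 0 : ℝ) + 2 * (B i 1 : ℝ)) * (n : ℝ)
            + ((∑ j, (C i j : ℝ) * y j) + (∑ j, (D i j : ℝ) * (z j : ℝ))) := by ring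
      _ = _ := by
          rw [Fin.cons_zero]
          congr 2
          · apply Finset.sum_congr rfl; intro j _; rw [e1 j]
          · apply Finset.sum_congr rfl; intro j _; rw [e2 j]
  obtain ⟨u, hQu, hu0, husat⟩ := fm_main (p + q) L hQ hfeas
  set yd : Fin p → ℝ := fun j => u (Fin.succ (Fin.castAdd q j)) with hyd
  set zd : Fin q → ℝ := fun j => u (Fin.succ (Fin.natAdd p j)) with hzd
  have hdir : ∀ i : Fin m, 0 ≤ ((B i 0 : ℝ) + 2 * (B i 1 : ℝ))
      + ((∑ j, (C i j : ℝ) * yd j) + (∑ j, (D i j : ℝ) * zd j)) := by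
    intro i
    have hmem : homog (row i) ∈ L.map homog :=
      List.mem_map.mpr ⟨row i, List.mem_map.mpr ⟨i, List.mem_finRange i, rfl⟩, rfl⟩
    have h5 := husat _ hmem
    rw [show (homog (row i)).1 = (row i).1 from rfl, hsum, hu0] at h5
    simpa [homog, hyd, hzd] using h5
  -- rationality : common denominator
  choose a ha using fun j => hQu (Fin.succ (Fin.natAdd p j))
  set N : ℕ := ∏ j, (a j).den with hN
  have hN1 : 1 ≤ N := Nat.succ_le_of_lt (Finset.prod_pos fun j _ => (a j).den_pos)
  set w : Fin q → ℤ := fun j => (a j).num * (∏ k ∈ Finset.univ.erase j, ((a k).den : ℤ)) with hw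
  have hkey : ∀ j, (w j : ℝ) = (N : ℝ) * zd j := by
    intro j
    have h1 : (w j : ℚ) = (a j) * (N : ℚ) := by
      have h2 : (a j).den * (∏ k ∈ Finset.univ.erase j, (a k).den) = N := by
        rw [hN]
        exact Finset.mul_prod_erase Finset.univ (fun k => (a k).den) (Finset.mem_univ j)
      have h2' : ((a j).den : ℚ) * (∏ k ∈ Finset.univ.erase j, ((a k).den : ℚ)) = (N : ℚ) := by
        have h2c := congrArg (fun x : ℕ => (x : ℚ)) h2
        push_cast at h2c
        exact h2c
      have hden0 : ((a j).den : ℚ) ≠ 0 := by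
        exact_mod_cast (a j).den_nz
      have h3 : ((a j).num : ℚ) = (a j) * ((a j).den : ℚ) := by
        have h := Rat.num_div_den (a j)
        rw [div_eq_iff hden0] at h
        exact h
      calc (w j : ℚ) = ((a j).num : ℚ) * (∏ k ∈ Finset.univ.erase j, ((a k).den : ℚ)) := by
            rw [hw]; push_cast; ring
        _ = ((a j) * ((a j).den : ℚ)) * (∏ k ∈ Finset.univ.erase j, ((a k).den : ℚ)) := by
            rw [h3]
        _ = (a j) * (N : ℚ) := by rw [← h2']; ring
    have h4 : zd j = ((a j : ℚ) : ℝ) := ha j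
    calc (w j : ℝ) = ((w j : ℚ) : ℝ) := by push_cast; ring
      _ = (((a j) * (N : ℚ) : ℚ) : ℝ) := by rw [h1]
      _ = (N : ℝ) * zd j := by rw [h4]; push_cast; ring
  -- witness for the point (2,1)
  have h21 : (![(2 : ℝ), 1] : Fin 2 → ℝ) ∈ Eset := ⟨1, Or.inr ⟨by norm_num, by norm_num⟩⟩
  rw [hE] at h21
  obtain ⟨y', z', hyz'⟩ := h21
  -- the contradiction point
  have hfinal : (![(2 : ℝ) + N, 1 + 2 * N] : Fin 2 → ℝ) ∈ Eset := by
    rw [hE]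
    refine ⟨fun j => y' j + (N : ℝ) * yd j, fun j => z' j + w j, ?_⟩
    intro i
    have h0 := hyz' i
    rw [Fin.sum_univ_two] at h0
    simp only [Matrix.cons_val_zero, Matrix.cons_val_one, Matrix.head_cons] at h0
    rw [Fin.sum_univ_two]
    simp only [Matrix.cons_val_zero, Matrix.cons_val_one, Matrix.head_cons]
    have hC : ∑ j, (C i j : ℝ) * (y' j + (N : ℝ) * yd j)
        = (∑ j, (C i j : ℝ) * y' j) + (N : ℝ) * ∑ j, (C i j : ℝ) * yd j := by
      rw [Finset.mul_sum, ← Finset.sum_add_distrib]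
      apply Finset.sum_congr rfl; intro j _; ring
    have hD : ∑ j, (D i j : ℝ) * ((z' j + w j : ℤ) : ℝ)
        = (∑ j, (D i j : ℝ) * (z' j : ℝ)) + (N : ℝ) * ∑ j, (D i j : ℝ) * zd j := by
      rw [Finset.mul_sum, ← Finset.sum_add_distrib]
      apply Finset.sum_congr rfl
      intro j _
      push_cast
      rw [hkey j]
      ring
    rw [hC, hD]
    have hd := hdir i
    have hN0 : (0 : ℝ) ≤ N := Nat.cast_nonneg N
    nlinarith [mul_le_mul_of_nonneg_left hd hN0]
  obtain ⟨l, hl | hl⟩ := hfinal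
  · obtain ⟨hl0, hl1⟩ := hl
    simp only [Matrix.cons_val_zero, Matrix.cons_val_one, Matrix.head_cons] at hl0 hl1
    linarith
  · obtain ⟨hl0, hl1⟩ := hl
    simp only [Matrix.cons_val_zero, Matrix.cons_val_one, Matrix.head_cons] at hl0 hl1
    have hN1' : (1 : ℝ) ≤ N := by exact_mod_cast hN1
    linarith

end FM


lemma intcone_zero {t : ℕ} (r : Fin t → Fin 2 → ℤ) : (0 : Fin 2 → ℝ) ∈ intcone r :=
  ⟨0, by simp⟩

lemma intcone_add {t : ℕ} {r : Fin t → Fin 2 → ℤ} {x y : Fin 2 → ℝ}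
    (hx : x ∈ intcone r) (hy : y ∈ intcone r) : x + y ∈ intcone r := by
  obtain ⟨a, ha⟩ := hx; obtain ⟨c, hc⟩ := hy
  refine ⟨a + c, fun j => ?_⟩
  simp only [Pi.add_apply, ha j, hc j, ← Finset.sum_add_distrib]
  congr 1; funext i; push_cast; ring

lemma intcone_gen {t : ℕ} (r : Fin t → Fin 2 → ℤ) (i : Fin t) :
    (fun j => (r i j : ℝ)) ∈ intcone r := by
  refine ⟨fun i' => if i' = i then 1 else 0, fun j => ?_⟩
  rw [Finset.sum_eq_single i]
  · simp
  · intro b _ hb; simp [hb]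
  · simp

theorem part1aux :
    ¬ ∃ (k t : ℕ) (P : Fin k → Set (Fin 2 → ℝ)) (r : Fin t → Fin 2 → ℤ),
        (∀ i, IsPolytope (P i)) ∧ Eset = (⋃ i, P i) + intcone r := by
  rintro ⟨k, t, P, r, hP, hE⟩
  -- boundedness of the union
  have hU : Bornology.IsBounded (⋃ i, P i) := by
    rw [Bornology.isBounded_iUnion]
    intro i
    obtain ⟨m, A, b, _, hb⟩ := hP i
    exact hb
  obtain ⟨M, hM⟩ := hU.exists_norm_le
  -- 0 ∈ Eset
  have h0 : (0 : Fin 2 → ℝ) ∈ Eset := ⟨0, Or.inl ⟨by simp, by simp⟩⟩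
  rw [hE] at h0
  rw [Set.mem_add] at h0
  obtain ⟨k0, hk0, c0, hc0, hk0c0⟩ := h0
  -- every element of the cone is in Eset
  have coneE : ∀ c ∈ intcone r, c ∈ Eset := by
    intro c hc
    have : k0 + (c0 + c) ∈ Eset := by
      rw [hE]; exact Set.add_mem_add hk0 (intcone_add hc0 hc)
    have he : k0 + (c0 + c) = c := by rw [← add_assoc, hk0c0, zero_add]
    rwa [he] at this
  -- each generator has the two-ray form
  have typ : ∀ i : Fin t, ∃ a : ℕ,
      ((r i 0 : ℝ) = a ∧ (r i 1 : ℝ) = 2 * a) ∨ ((r i 0 : ℝ) = 2 * a ∧ (r i 1 : ℝ) = a) := by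
    intro i
    obtain ⟨l, hl⟩ := coneE _ (intcone_gen r i)
    exact ⟨l, hl⟩
  -- decomposition of large points on each ray
  have decomp : ∀ x ∈ Eset, ∃ kv : Fin 2 → ℝ, ∃ lam : Fin t → ℕ,
      (∀ j, |kv j| ≤ M) ∧ ∀ j : Fin 2, x j = kv j + ∑ i, (lam i : ℝ) * (r i j : ℝ) := by
    intro x hx
    rw [hE, Set.mem_add] at hx
    obtain ⟨kv, hkv, c, ⟨lam, hlam⟩, hsum⟩ := hx
    refine ⟨kv, lam, fun j => ?_, fun j => ?_⟩
    · calc |kv j| = ‖kv j‖ := rfl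
        _ ≤ ‖kv‖ := norm_le_pi_norm kv j
        _ ≤ M := hM kv hkv
    · rw [← hsum, ← hlam j]; rfl
  -- the big natural number
  set n : ℕ := ⌈M⌉₊ + 1 with hn
  have hnM : (M : ℝ) < n := by
    have := Nat.le_ceil M
    push_cast [hn]; linarith
  -- claim 1 : there is a generator of form (a, 2a) with a ≥ 1
  have claim1 : ∃ (i : Fin t) (a : ℕ), 1 ≤ a ∧ (r i 0 : ℝ) = a ∧ (r i 1 : ℝ) = 2 * a := by
    by_contra hcon
    push_neg at hcon
    have typ2 : ∀ i : Fin t, ∃ a : ℕ, (r i 0 : ℝ) = 2 * a ∧ (r i 1 : ℝ) = a := by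
      intro i
      obtain ⟨a, ha | ha⟩ := typ i
      · rcases Nat.eq_zero_or_pos a with h | h
        · subst h; exact ⟨0, by simpa using ha.1, by simpa using ha.2⟩
        · exact (hcon i a h ha.1 ha.2).elim
      · exact ⟨a, ha.1, ha.2⟩
    choose a' ha' using typ2
    have hx : (![(n : ℝ), 2 * n] : Fin 2 → ℝ) ∈ Eset := ⟨n, Or.inl ⟨by simp, by simp⟩⟩
    obtain ⟨kv, lam, hkvM, hrep⟩ := decomp _ hx
    have h0' := hrep 0
    have h1' := hrep 1
    simp only [Matrix.cons_val_zero, Matrix.cons_val_one, Matrix.head_cons] at h0' h1'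
    set T : ℝ := ∑ i, (lam i : ℝ) * (a' i : ℝ) with hT
    have e0 : (n : ℝ) = kv 0 + 2 * T := by
      rw [h0', hT, Finset.mul_sum]
      congr 1
      apply Finset.sum_congr rfl
      intro i _
      rw [(ha' i).1]; ring
    have e1 : 2 * (n : ℝ) = kv 1 + T := by
      rw [h1', hT]
      congr 1
      apply Finset.sum_congr rfl
      intro i _
      rw [(ha' i).2]
    have hb0 := abs_le.mp (hkvM 0)
    have hb1 := abs_le.mp (hkvM 1)
    linarith
  -- claim 2 : there is a generator of form (2a, a) with a ≥ 1
  have claim2 : ∃ (i : Fin t) (a : ℕ), 1 ≤ a ∧ (r i 0 : ℝ) = 2 * a ∧ (r i 1 : ℝ) = a := by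
    by_contra hcon
    push_neg at hcon
    have typ2 : ∀ i : Fin t, ∃ a : ℕ, (r i 0 : ℝ) = a ∧ (r i 1 : ℝ) = 2 * a := by
      intro i
      obtain ⟨a, ha | ha⟩ := typ i
      · exact ⟨a, ha.1, ha.2⟩
      · rcases Nat.eq_zero_or_pos a with h | h
        · subst h; exact ⟨0, by simpa using ha.1, by simpa using ha.2⟩
        · exact (hcon i a h ha.1 ha.2).elim
    choose a' ha' using typ2
    have hx : (![2 * (n : ℝ), (n : ℝ)] : Fin 2 → ℝ) ∈ Eset := ⟨n, Or.inr ⟨by simp, by simp⟩⟩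
    obtain ⟨kv, lam, hkvM, hrep⟩ := decomp _ hx
    have h0' := hrep 0
    have h1' := hrep 1
    simp only [Matrix.cons_val_zero, Matrix.cons_val_one, Matrix.head_cons] at h0' h1'
    set T : ℝ := ∑ i, (lam i : ℝ) * (a' i : ℝ) with hT
    have e0 : 2 * (n : ℝ) = kv 0 + T := by
      rw [h0', hT]
      congr 1
      apply Finset.sum_congr rfl
      intro i _
      rw [(ha' i).1]
    have e1 : (n : ℝ) = kv 1 + 2 * T := by
      rw [h1', hT, Finset.mul_sum]
      congr 1
      apply Finset.sum_congr rfl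
      intro i _
      rw [(ha' i).2]; ring
    have hb0 := abs_le.mp (hkvM 0)
    have hb1 := abs_le.mp (hkvM 1)
    linarith
  obtain ⟨i1, a1, ha1, hi10, hi11⟩ := claim1
  obtain ⟨i2, a2, ha2, hi20, hi21⟩ := claim2
  -- the sum of these two generators is in the cone, hence in Eset : contradiction
  have hg : ((fun j => (r i1 j : ℝ)) + fun j => (r i2 j : ℝ)) ∈ Eset :=
    coneE _ (intcone_add (intcone_gen r i1) (intcone_gen r i2))
  obtain ⟨l, hl | hl⟩ := hg
  · obtain ⟨hl0, hl1⟩ := hl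
    simp only [Pi.add_apply, hi10, hi11, hi20, hi21] at hl0 hl1
    have h1 : (1 : ℝ) ≤ a1 := by exact_mod_cast ha1
    have h2 : (1 : ℝ) ≤ a2 := by exact_mod_cast ha2
    linarith
  · obtain ⟨hl0, hl1⟩ := hl
    simp only [Pi.add_apply, hi10, hi11, hi20, hi21] at hl0 hl1
    have h1 : (1 : ℝ) ≤ a1 := by exact_mod_cast ha1
    have h2 : (1 : ℝ) ≤ a2 := by exact_mod_cast ha2
    linarith


/-- E cannot be written as (⋃ᵢ Pᵢ) + intcone{r¹,…,rᵗ} with polytopes Pᵢ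
and integer vectors rʲ; in particular (by Jeroslow–Lowe), E is not MILP-representable. -/
theorem stmt0 :
    (¬ ∃ (k t : ℕ) (P : Fin k → Set (Fin 2 → ℝ)) (r : Fin t → Fin 2 → ℤ),
        (∀ i, IsPolytope (P i)) ∧ Eset = (⋃ i, P i) + intcone r) ∧
    ¬ MILPRep 2 Eset := by
  exact ⟨part1aux, part2aux⟩
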